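/- arXiv:2104.14009 — 7 statements merged into one kernel-verified Lean document; each statement's English description precedes it below -/
import Mathlib

section
/- Let f : ℤ × ℕ → ℝ be a strictly positive solution of the CRW-type discrete diffusion equation f_j^{n+1} = p(f_{j-1}^n + f_{j+1}^n) - (2p-1) f_j^{n-1}, and define u_j^n = f_{j+1}^n / f_j^n and v_j^n = f_j^{n+1} / f_j^n. Then for all j and all n ≥ 1: u_j^{n+1} = u_j^n · [p(u_{j+1}^n + 1/u_j^n) - (2p-1)/v_{j+1}^{n-1}] / [p(u_j^n + 1/u_{j-1}^n) - (2p-1)/v_j^{n-1}] and v_j^{n+1} = v_j^n · [p(u_j^{n+1} + 1/u_{j-1}^{n+1}) - (2p-1)/v_j^n] / [p(u_j^n + 1/u_{j-1}^n) - (2p-1)/v_j^{n-1}], provided all denominators are nonzero. -/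
/-- The discrete Cole–Hopf transformation u_j^n = f_{j+1}^n/f_j^n,
v_j^n = f_j^{n+1}/f_j^n of a positive solution of the CRW-type discrete
diffusion equation satisfies the CRW-type discrete Burgers equation. -/
theorem crw_discrete_cole_hopf (p : ℝ) (f : ℤ → ℕ → ℝ)
    (hfpos : ∀ (j : ℤ) (n : ℕ), 0 < f j n)
    (hf : ∀ (j : ℤ) (n : ℕ),
      f j (n + 2) = p * (f (j - 1) (n + 1) + f (j + 1) (n + 1)) - (2 * p - 1) * f j n)
    (u v : ℤ → ℕ → ℝ)
    (hu : ∀ (j : ℤ) (n : ℕ), u j n = f (j + 1) n / f j n)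
    (hv : ∀ (j : ℤ) (n : ℕ), v j n = f j (n + 1) / f j n) :
    ∀ (j : ℤ) (n : ℕ),
      (p * (u (j + 1) (n + 1) + 1 / u j (n + 1)) - (2 * p - 1) * (1 / v (j + 1) n) ≠ 0 →
       p * (u j (n + 1) + 1 / u (j - 1) (n + 1)) - (2 * p - 1) * (1 / v j n) ≠ 0 →
        u j (n + 2) = u j (n + 1) *
          ((p * (u (j + 1) (n + 1) + 1 / u j (n + 1)) - (2 * p - 1) * (1 / v (j + 1) n)) /
           (p * (u j (n + 1) + 1 / u (j - 1) (n + 1)) - (2 * p - 1) * (1 / v j n)))) ∧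
      (p * (u j (n + 2) + 1 / u (j - 1) (n + 2)) - (2 * p - 1) * (1 / v j (n + 1)) ≠ 0 →
       p * (u j (n + 1) + 1 / u (j - 1) (n + 1)) - (2 * p - 1) * (1 / v j n) ≠ 0 →
        v j (n + 2) = v j (n + 1) *
          ((p * (u j (n + 2) + 1 / u (j - 1) (n + 2)) - (2 * p - 1) * (1 / v j (n + 1))) /
           (p * (u j (n + 1) + 1 / u (j - 1) (n + 1)) - (2 * p - 1) * (1 / v j n)))) := by
  have hne : ∀ (j : ℤ) (n : ℕ), f j n ≠ 0 := fun j n => (hfpos j n).ne'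
  -- each bracket equals f j (n+2) / f j (n+1)
  have hB : ∀ (j : ℤ) (n : ℕ),
      p * (u j (n + 1) + 1 / u (j - 1) (n + 1)) - (2 * p - 1) * (1 / v j n)
        = f j (n + 2) / f j (n + 1) := by
    intro j n
    rw [hu, hu, hv, hf j n]
    have h1 : j - 1 + 1 = j := by ring
    rw [h1]
    field_simp
    ring
  intro j n
  have e1 := hB (j + 1) n
  have e2 := hB j n
  have e3 := hB j (n + 1)
  have h1 : j + 1 - 1 = j := by ring
  rw [h1] at e1
  constructor
  · intro _ _
    rw [e1, e2, hu, hu]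
    field_simp [hne]
  · intro _ _
    rw [e3, e2, hv, hv]
    field_simp [hne]
end

section
/- Let F : ℤ × ℤ → ℝ satisfy the CRW-type ultradiscrete diffusion equation F_j^{n+1} = max(F_{j-1}^n, F_{j+1}^n, R + F_j^{n-1}) with R ∈ ℝ ∪ {-∞}, and define U_j^n := F_{j+1}^n - F_j^n + L/2 and V_j^n := F_j^{n+1} - F_j^n + L/2 for a constant L. Then U_j^{n+1} = U_j^n + min(U_{j-1}^n, L - U_j^n, V_j^{n-1} - R) - min(U_j^n, L - U_{j+1}^n, V_{j+1}^{n-1} - R) and V_j^{n+1} = V_j^n + min(U_{j-1}^n, L - U_j^n, V_j^{n-1} - R) - min(U_{j-1}^{n+1}, L - U_j^{n+1}, V_j^n - R) for all j and n. -/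
private lemma sub_max3 (a b c d : ℝ) :
    c - max a (max b d) = min (c - a) (min (c - b) (c - d)) := by
  rcases le_total a b with h1 | h1 <;> rcases le_total a d with h2 | h2 <;>
    rcases le_total b d with h3 | h3 <;>
    simp [max_def, min_def] <;> split_ifs <;> linarith

/-- The CRW-type ultradiscrete Cole–Hopf transformation applied to the
CRW-type ultradiscrete diffusion equation yields the CRW-type ultradiscrete
Burgers equation. -/
theorem crw_ultradiscrete_cole_hopf (R L : ℝ) (F : ℤ → ℤ → ℝ)
    (hF : ∀ (j n : ℤ),
      F j (n + 1) = max (F (j - 1) n) (max (F (j + 1) n) (R + F j (n - 1))))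
    (U V : ℤ → ℤ → ℝ)
    (hU : ∀ (j n : ℤ), U j n = F (j + 1) n - F j n + L / 2)
    (hV : ∀ (j n : ℤ), V j n = F j (n + 1) - F j n + L / 2) :
    ∀ (j n : ℤ),
      U j (n + 1) = U j n
        + min (U (j - 1) n) (min (L - U j n) (V j (n - 1) - R))
        - min (U j n) (min (L - U (j + 1) n) (V (j + 1) (n - 1) - R)) ∧
      V j (n + 1) = V j n
        + min (U (j - 1) n) (min (L - U j n) (V j (n - 1) - R))
        - min (U (j - 1) (n + 1)) (min (L - U j (n + 1)) (V j n - R)) := by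
  have key : ∀ (j n : ℤ),
      min (U (j - 1) n) (min (L - U j n) (V j (n - 1) - R)) = L - V j n := by
    intro j n
    have h1 := hU (j - 1) n
    have h2 := hU j n
    have h3 := hV j (n - 1)
    have h4 := hV j n
    have h5 := hF j n
    have e1 : j - 1 + 1 = j := by ring
    have e2 : n - 1 + 1 = n := by ring
    rw [e1] at h1; rw [e2] at h3
    rw [h1, h2, h3, h4, h5,
      show L - (max (F (j - 1) n) (max (F (j + 1) n) (R + F j (n - 1))) - F j n + L / 2)
        = (F j n + L / 2) - max (F (j - 1) n) (max (F (j + 1) n) (R + F j (n - 1))) from by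
          ring, sub_max3]
    congr 1
    · ring
    congr 1 <;> ring
  intro j n
  have kjn := key j n
  have kj1n := key (j + 1) n
  have kjn1 := key j (n + 1)
  have e3 : j + 1 - 1 = j := by ring
  have e4 : n + 1 - 1 = n := by ring
  rw [e3] at kj1n; rw [e4] at kjn1
  constructor
  · rw [kjn, kj1n, hU j (n + 1), hU j n, hV j n, hV (j + 1) n]
    ring
  · rw [kjn, kjn1]
    ring
end

section
/- Let U, Ṽ : ℤ × ℤ → ℝ satisfy U_j^{n+1} = U_j^n + min(U_{j-1}^n, L - U_j^n, Ṽ_j^{n-1}) - min(U_j^n, L - U_{j+1}^n, Ṽ_{j+1}^{n-1}) and Ṽ_j^{n+1} = Ṽ_j^n + min(U_{j-1}^n, L - U_j^n, Ṽ_j^{n-1}) - min(U_{j-1}^{n+1}, L - U_j^{n+1}, Ṽ_j^n) for n ≥ 0. If 0 ≤ U_j^0 ≤ L and 0 ≤ Ṽ_j^{-1} and 0 ≤ Ṽ_j^0 and Ṽ_j^{-1} + Ṽ_j^0 ≤ L for all j, then for all n ≥ 1 and all j it holds that 0 ≤ U_j^n ≤ L and 0 ≤ Ṽ_j^n ≤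 L. -/
/-- Theorem 1 of the paper: boundedness of the state variables of the
parameter-free CRW-type ultradiscrete Burgers equation. -/
theorem crw_ud_burgers_bounded (L : ℝ) (U V : ℤ → ℤ → ℝ)
    (hU : ∀ (j n : ℤ), 0 ≤ n →
      U j (n + 1) = U j n
        + min (U (j - 1) n) (min (L - U j n) (V j (n - 1)))
        - min (U j n) (min (L - U (j + 1) n) (V (j + 1) (n - 1))))
    (hV : ∀ (j n : ℤ), 0 ≤ n →
      V j (n + 1) = V j n
        + min (U (j - 1) n) (min (L - U j n) (V j (n - 1)))
        - min (U (j - 1) (n + 1)) (min (L - U j (n + 1)) (V j n)))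
    (hU0 : ∀ j : ℤ, 0 ≤ U j 0 ∧ U j 0 ≤ L)
    (hVm1 : ∀ j : ℤ, 0 ≤ V j (-1)) (hV0 : ∀ j : ℤ, 0 ≤ V j 0)
    (hVsum : ∀ j : ℤ, V j (-1) + V j 0 ≤ L) :
    ∀ (n : ℤ), 1 ≤ n → ∀ j : ℤ,
      (0 ≤ U j n ∧ U j n ≤ L) ∧ (0 ≤ V j n ∧ V j n ≤ L) := by
  -- the key invariant, shown for all n ≥ 0 by induction
  have key : ∀ m : ℕ, ∀ j : ℤ,
      (0 ≤ U j (m : ℤ) ∧ U j (m : ℤ) ≤ L) ∧ 0 ≤ V j ((m : ℤ) - 1) ∧ 0 ≤ V j (m : ℤ) ∧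
        V j (m : ℤ) + min (U (j - 1) (m : ℤ)) (min (L - U j (m : ℤ)) (V j ((m : ℤ) - 1))) ≤ L := by
    intro m
    induction m with
    | zero =>
      intro j
      have h0 : ((0 : ℕ) : ℤ) = 0 := by norm_num
      have hm : (0 : ℤ) - 1 = -1 := by norm_num
      rw [h0, hm]
      refine ⟨hU0 j, hVm1 j, hV0 j, ?_⟩
      have h1 : min (U (j - 1) 0) (min (L - U j 0) (V j (-1))) ≤ V j (-1) :=
        (min_le_right _ _).trans (min_le_right _ _)
      have h2 := hVsum j
      linarith
    | succ m IH =>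
      set n : ℤ := (m : ℤ) with hn_def
      have hcast : ((m + 1 : ℕ) : ℤ) = n + 1 := by push_cast; ring
      have hidx : n + 1 - 1 = n := by ring
      have hn : (0 : ℤ) ≤ n := by positivity
      -- flux lower bound at time n
      have ha0 : ∀ k : ℤ, 0 ≤ min (U (k - 1) n) (min (L - U k n) (V k (n - 1))) := by
        intro k
        exact le_min (IH (k - 1)).1.1 (le_min (by linarith [(IH k).1.2]) (IH k).2.1)
      -- new U bounds
      have hUnew : ∀ j : ℤ, 0 ≤ U j (n + 1) ∧ U j (n + 1) ≤ L := by
        intro j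
        have h := hU j n hn
        have hA2 : min (U (j - 1) n) (min (L - U j n) (V j (n - 1))) ≤ L - U j n :=
          (min_le_right _ _).trans (min_le_left _ _)
        have hB1 : min (U j n) (min (L - U (j + 1) n) (V (j + 1) (n - 1))) ≤ U j n :=
          min_le_left _ _
        have hB0 : 0 ≤ min (U j n) (min (L - U (j + 1) n) (V (j + 1) (n - 1))) :=
          le_min (IH j).1.1 (le_min (by linarith [(IH (j + 1)).1.2]) (IH (j + 1)).2.1)
        constructor <;> [linarith [ha0 j]; linarith]
      intro j
      rw [hcast, hidx]
      have hVj := hV j n hn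
      have hC1 : min (U (j - 1) (n + 1)) (min (L - U j (n + 1)) (V j n)) ≤ V j n :=
        (min_le_right _ _).trans (min_le_right _ _)
      have hC0 : 0 ≤ min (U (j - 1) (n + 1)) (min (L - U j (n + 1)) (V j n)) :=
        le_min (hUnew (j - 1)).1 (le_min (by linarith [(hUnew j).2]) (IH j).2.2.1)
      have hinv := (IH j).2.2.2
      have hA0 := ha0 j
      exact ⟨hUnew j, (IH j).2.2.1, by linarith, by linarith⟩
  intro n hn j
  obtain ⟨m, rfl⟩ : ∃ m : ℕ, n = (m : ℤ) :=
    ⟨n.toNat, (Int.toNat_of_nonneg (by linarith)).symm⟩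
  have h := key m j
  have hA0 : 0 ≤ min (U (j - 1) (m : ℤ)) (min (L - U j (m : ℤ)) (V j ((m : ℤ) - 1))) :=
    le_min (key m (j - 1)).1.1 (le_min (by linarith [h.1.2]) h.2.1)
  exact ⟨h.1, h.2.2.1, by linarith [h.2.2.2]⟩
end

section
/- Let U, Ṽ satisfy the parameter-free CRW-type ultradiscrete Burgers equation with flux X_j^n := min(U_{j-1}^n, L - U_j^n, Ṽ_j^{n-1}). Then for all n ≥ 0 and all j, Ṽ_j^n = I_j^0 - X_j^n, where I_j^0 := min(U_{j-1}^0, L - U_j^0, Ṽ_j^{-1}) + Ṽ_j^0. In particular Ṽ_j^n is obtained by a telescoping sum from the second flux equation. -/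
/-- Telescoping identity: the maximum-inflow variable of the parameter-free
CRW-type ultradiscrete Burgers equation satisfies Ṽ_j^n = I_j^0 - X_j^n with
I_j^0 := min(U_{j-1}^0, L - U_j^0, Ṽ_j^{-1}) + Ṽ_j^0. -/
theorem crw_ud_burgers_telescoping (L : ℝ) (U V : ℤ → ℤ → ℝ)
    (hU : ∀ (j n : ℤ), 0 ≤ n →
      U j (n + 1) = U j n
        + min (U (j - 1) n) (min (L - U j n) (V j (n - 1)))
        - min (U j n) (min (L - U (j + 1) n) (V (j + 1) (n - 1))))
    (hV : ∀ (j n : ℤ), 0 ≤ n →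
      V j (n + 1) = V j n
        + min (U (j - 1) n) (min (L - U j n) (V j (n - 1)))
        - min (U (j - 1) (n + 1)) (min (L - U j (n + 1)) (V j n)))
    (X : ℤ → ℤ → ℝ)
    (hX : ∀ (j n : ℤ), X j n = min (U (j - 1) n) (min (L - U j n) (V j (n - 1))))
    (I : ℤ → ℝ)
    (hI : ∀ j : ℤ, I j = min (U (j - 1) 0) (min (L - U j 0) (V j (-1))) + V j 0) :
    ∀ (j n : ℤ), 0 ≤ n → V j n = I j - X j n := by
  intro j n hn
  lift n to ℕ using hn
  induction n with
  | zero =>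
    rw [hI, hX]
    norm_num
  | succ m ih =>
    have hm : (0:ℤ) ≤ (m:ℤ) := Int.ofNat_nonneg m
    have h := hV j m hm
    push_cast
    have hx0 := hX j m
    have hx1 : X j ((m:ℤ)+1) = U (j-1) ((m:ℤ)+1) ⊓ ((L - U j ((m:ℤ)+1)) ⊓ V j m) := by
      rw [hX]; norm_num
    rw [h, ← hx0, ← hx1]
    linarith [ih]
end

section
/- Let U, Ṽ satisfy the parameter-free CRW-type ultradiscrete Burgers equation. Assume 0 ≤ U_j^0 ≤ L, Ṽ_j^{-1} ≥ 0 and Ṽ_j^0 ≥ 0 for all j, and additionally Ṽ_j^{-1} + Ṽ_j^0 ≤ L for all j. Then for every n ≥ 1 and every j, 0 ≤ U_j^n ≤ L and 0 ≤ Ṽ_j^n ≤ I_j^0, where I_j^0 = min(U_{j-1}^0, L - U_j^0, Ṽ_j^{-1}) + Ṽ_j^0. -/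
/-- Theorem 2 of the paper: refined upper bound Ṽ_j^n ≤ I_j^0 for the
maximum-inflow variable of the parameter-free CRW-type ultradiscrete Burgers
equation. -/
theorem crw_ud_burgers_refined_bound (L : ℝ) (U V : ℤ → ℤ → ℝ)
    (hU : ∀ (j n : ℤ), 0 ≤ n →
      U j (n + 1) = U j n
        + min (U (j - 1) n) (min (L - U j n) (V j (n - 1)))
        - min (U j n) (min (L - U (j + 1) n) (V (j + 1) (n - 1))))
    (hV : ∀ (j n : ℤ), 0 ≤ n →
      V j (n + 1) = V j n
        + min (U (j - 1) n) (min (L - U j n) (V j (n - 1)))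
        - min (U (j - 1) (n + 1)) (min (L - U j (n + 1)) (V j n)))
    (hU0 : ∀ j : ℤ, 0 ≤ U j 0 ∧ U j 0 ≤ L)
    (hVm1 : ∀ j : ℤ, 0 ≤ V j (-1)) (hV0 : ∀ j : ℤ, 0 ≤ V j 0)
    (hVsum : ∀ j : ℤ, V j (-1) + V j 0 ≤ L)
    (I : ℤ → ℝ)
    (hI : ∀ j : ℤ, I j = min (U (j - 1) 0) (min (L - U j 0) (V j (-1))) + V j 0) :
    ∀ (n : ℤ), 1 ≤ n → ∀ j : ℤ,
      (0 ≤ U j n ∧ U j n ≤ L) ∧ (0 ≤ V j n ∧ V j n ≤ I j) := by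
  set f : ℤ → ℤ → ℝ := fun j n => min (U (j - 1) n) (min (L - U j n) (V j (n - 1))) with hf
  have hU' : ∀ (j n : ℤ), 0 ≤ n → U j (n + 1) = U j n + f j n - f (j + 1) n := by
    intro j n hn
    have h1 : (j : ℤ) + 1 - 1 = j := by ring
    simp only [hf, h1]
    exact hU j n hn
  have hV' : ∀ (j n : ℤ), 0 ≤ n → V j (n + 1) = V j n + f j n - f j (n + 1) := by
    intro j n hn
    have h1 : (n : ℤ) + 1 - 1 = n := by ring
    simp only [hf, h1]
    exact hV j n hn
  have key : ∀ n : ℤ, 0 ≤ n → ∀ j : ℤ,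
      0 ≤ U j n ∧ U j n ≤ L ∧ 0 ≤ V j n ∧ 0 ≤ V j (n - 1) ∧ V j n + f j n = I j := by
    have nat : ∀ m : ℕ, ∀ j : ℤ,
        0 ≤ U j m ∧ U j m ≤ L ∧ 0 ≤ V j m ∧ 0 ≤ V j ((m : ℤ) - 1) ∧ V j m + f j m = I j := by
      intro m
      induction m with
      | zero =>
        intro j
        have h0 : ((0 : ℕ) : ℤ) - 1 = -1 := by norm_num
        simp only [Nat.cast_zero]
        refine ⟨(hU0 j).1, (hU0 j).2, hV0 j, by norm_num; exact hVm1 j, ?_⟩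
        have h0' : (0 : ℤ) - 1 = -1 := by norm_num
        simp only [hf, h0']
        rw [hI j]; ring
      | succ k ih =>
        have hn : (0 : ℤ) ≤ (k : ℤ) := Int.ofNat_nonneg k
        have hcast : ((k + 1 : ℕ) : ℤ) = (k : ℤ) + 1 := by push_cast; ring
        rw [hcast]
        set n : ℤ := (k : ℤ) with hnk
        intro j
        have fnonneg : ∀ i : ℤ, 0 ≤ f i n := by
          intro i
          exact le_min (ih (i - 1)).1
            (le_min (by linarith [(ih i).2.1]) (ih i).2.2.2.1)
        have fle1 : f (j + 1) n ≤ U j n := by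
          have h1 : (j : ℤ) + 1 - 1 = j := by ring
          simpa only [hf, h1] using min_le_left _ _
        have fle2 : f j n ≤ L - U j n :=
          le_trans (min_le_right _ _) (min_le_left _ _)
        have fle3 : f j (n + 1) ≤ V j n := by
          have h1 : (n : ℤ) + 1 - 1 = n := by ring
          simpa only [hf, h1] using le_trans (min_le_right _ _) (min_le_right _ _)
        have hn1 : (n : ℤ) + 1 - 1 = n := by ring
        refine ⟨?_, ?_, ?_, ?_, ?_⟩
        · rw [hU' j n hn]; linarith [fnonneg j]
        · rw [hU' j n hn]; linarith [fnonneg (j + 1)]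
        · rw [hV' j n hn]; linarith [fnonneg j]
        · rw [hn1]; exact (ih j).2.2.1
        · rw [hV' j n hn]
          have := (ih j).2.2.2.2
          linarith
    intro n hn
    lift n to ℕ using hn
    exact nat n
  intro n hn j
  have h0n : (0 : ℤ) ≤ n := by linarith
  obtain ⟨h1, h2, h3, h4, h5⟩ := key n h0n j
  have fnonneg : 0 ≤ f j n :=
    le_min (key n h0n (j - 1)).1
      (le_min (by linarith [(key n h0n j).2.1]) h4)
  exact ⟨⟨h1, h2⟩, h3, by linarith⟩
end

section
/- Let U, Ṽ satisfy the parameter-free CRW-type ultradiscrete Burgers equation with initial data satisfying 0 ≤ U_j^0 ≤ L, Ṽ_j^{-1} + Ṽ_j^0 ≤ L, Ṽ_j^{-1} ≥ 0, Ṽ_j^0 ≥ 0 for all j, and suppose M := sup_j I_j^0 < ∞ where I_j^0 = min(U_{j-1}^0, L - U_j^0, Ṽ_j^{-1}) + Ṽ_j^0. If moreover all initial values U_j^0, Ṽ_j^{-1}, Ṽ_j^0 and L are integers, then for all n ≥ 1 and all j, (U_j^n, Ṽ_j^n) ∈ {0,1,…,L} × {0,1,…,M}; i.e., the system defines a cellular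 automaton with finite state set. -/
/-- Corollary: with integer initial data and M an upper bound for the
initial quantities I_j^0, the CRW-type ultradiscrete Burgers equation defines
a cellular automaton with states (U_j^n, Ṽ_j^n) ∈ {0,…,L} × {0,…,M}. -/
theorem crw_ud_burgers_cellular_automaton (L : ℤ) (U V : ℤ → ℤ → ℝ)
    (hU : ∀ (j n : ℤ), 0 ≤ n →
      U j (n + 1) = U j n
        + min (U (j - 1) n) (min ((L : ℝ) - U j n) (V j (n - 1)))
        - min (U j n) (min ((L : ℝ) - U (j + 1) n) (V (j + 1) (n - 1))))
    (hV : ∀ (j n : ℤ), 0 ≤ n →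
      V j (n + 1) = V j n
        + min (U (j - 1) n) (min ((L : ℝ) - U j n) (V j (n - 1)))
        - min (U (j - 1) (n + 1)) (min ((L : ℝ) - U j (n + 1)) (V j n)))
    (hU0 : ∀ j : ℤ, 0 ≤ U j 0 ∧ U j 0 ≤ (L : ℝ))
    (hVm1 : ∀ j : ℤ, 0 ≤ V j (-1)) (hV0 : ∀ j : ℤ, 0 ≤ V j 0)
    (hVsum : ∀ j : ℤ, V j (-1) + V j 0 ≤ (L : ℝ))
    (M : ℝ)
    (hM : ∀ j : ℤ, min (U (j - 1) 0) (min ((L : ℝ) - U j 0) (V j (-1))) + V j 0 ≤ M)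
    (hUint : ∀ j : ℤ, ∃ k : ℤ, U j 0 = (k : ℝ))
    (hVm1int : ∀ j : ℤ, ∃ k : ℤ, V j (-1) = (k : ℝ))
    (hV0int : ∀ j : ℤ, ∃ k : ℤ, V j 0 = (k : ℝ)) :
    ∀ (n : ℤ), 1 ≤ n → ∀ j : ℤ,
      (∃ a : ℤ, U j n = (a : ℝ) ∧ 0 ≤ a ∧ a ≤ L) ∧
      (∃ b : ℤ, V j n = (b : ℝ) ∧ 0 ≤ b ∧ (b : ℝ) ≤ M) := by
  set f : ℤ → ℤ → ℝ :=
    fun j n => min (U (j - 1) n) (min ((L : ℝ) - U j n) (V j (n - 1))) with hfdef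
  have hUf : ∀ j n : ℤ, 0 ≤ n → U j (n + 1) = U j n + f j n - f (j + 1) n := by
    intro j n hn
    have h1 : (j + 1 - 1 : ℤ) = j := by ring
    simp only [hfdef, h1]
    exact hU j n hn
  have hVf : ∀ j n : ℤ, 0 ≤ n → V j (n + 1) = V j n + f j n - f j (n + 1) := by
    intro j n hn
    have h1 : (n + 1 - 1 : ℤ) = n := by ring
    simp only [hfdef, h1]
    exact hV j n hn
  have key : ∀ n : ℤ, 0 ≤ n → ∀ j : ℤ,
      (∃ a : ℤ, U j n = (a : ℝ) ∧ 0 ≤ a ∧ a ≤ L) ∧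
      (∃ b : ℤ, V j (n - 1) = (b : ℝ) ∧ 0 ≤ b) ∧
      (∃ c : ℤ, V j n = (c : ℝ) ∧ 0 ≤ c) ∧
      V j n + f j n = V j 0 + f j 0 := by
    refine Int.le_induction ?_ ?_
    · intro j
      refine ⟨?_, ?_, ?_, rfl⟩
      · obtain ⟨k, hk⟩ := hUint j
        refine ⟨k, hk, ?_, ?_⟩
        · have := (hU0 j).1; rw [hk] at this; exact_mod_cast this
        · have := (hU0 j).2; rw [hk] at this; exact_mod_cast this
      · obtain ⟨k, hk⟩ := hVm1int j
        have h0 : (0 - 1 : ℤ) = -1 := by ring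
        rw [h0]
        refine ⟨k, hk, ?_⟩
        have := hVm1 j; rw [hk] at this; exact_mod_cast this
      · obtain ⟨k, hk⟩ := hV0int j
        refine ⟨k, hk, ?_⟩
        have := hV0 j; rw [hk] at this; exact_mod_cast this
    · intro n hn ih
      -- extract real-valued bounds at time n
      have hUlo : ∀ j : ℤ, (0 : ℝ) ≤ U j n := by
        intro j; obtain ⟨a, ha, h0, _⟩ := (ih j).1; rw [ha]; exact_mod_cast h0
      have hUhi : ∀ j : ℤ, U j n ≤ (L : ℝ) := by
        intro j; obtain ⟨a, ha, _, h1⟩ := (ih j).1; rw [ha]; exact_mod_cast h1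
      have hVm : ∀ j : ℤ, (0 : ℝ) ≤ V j (n - 1) := by
        intro j; obtain ⟨b, hb, h0⟩ := (ih j).2.1; rw [hb]; exact_mod_cast h0
      have hVn : ∀ j : ℤ, (0 : ℝ) ≤ V j n := by
        intro j; obtain ⟨c, hc, h0⟩ := (ih j).2.2.1; rw [hc]; exact_mod_cast h0
      have hf0 : ∀ j : ℤ, (0 : ℝ) ≤ f j n := by
        intro j
        exact le_min (hUlo _) (le_min (by linarith [hUhi j]) (hVm j))
      have hfU : ∀ j : ℤ, f (j + 1) n ≤ U j n := by
        intro j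
        have h1 : (j + 1 - 1 : ℤ) = j := by ring
        calc f (j + 1) n ≤ U (j + 1 - 1) n := min_le_left _ _
          _ = U j n := by rw [h1]
      have hfL : ∀ j : ℤ, f j n ≤ (L : ℝ) - U j n :=
        fun j => (min_le_right _ _).trans (min_le_left _ _)
      have hfV : ∀ j : ℤ, f j (n + 1) ≤ V j n := by
        intro j
        have h1 : (n + 1 - 1 : ℤ) = n := by ring
        simp only [hfdef, h1]
        exact (min_le_right _ _).trans (min_le_right _ _)
      -- integrality of f at time n
      have hfint : ∀ j : ℤ, ∃ k : ℤ, f j n = (k : ℝ) := by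
        intro j
        obtain ⟨a1, ha1, _⟩ := (ih (j - 1)).1
        obtain ⟨a2, ha2, _⟩ := (ih j).1
        obtain ⟨b, hb, _⟩ := (ih j).2.1
        refine ⟨min a1 (min (L - a2) b), ?_⟩
        simp only [hfdef]
        rw [ha1, ha2, hb]
        push_cast
        rfl
      -- integrality of U at time n+1
      have hUint' : ∀ j : ℤ, ∃ a : ℤ, U j (n + 1) = (a : ℝ) := by
        intro j
        obtain ⟨a, ha, _⟩ := (ih j).1
        obtain ⟨k1, hk1⟩ := hfint j
        obtain ⟨k2, hk2⟩ := hfint (j + 1)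
        refine ⟨a + k1 - k2, ?_⟩
        rw [hUf j n hn, ha, hk1, hk2]; push_cast; ring
      -- real bounds on U at time n+1
      have hUlo' : ∀ j : ℤ, (0 : ℝ) ≤ U j (n + 1) := by
        intro j
        rw [hUf j n hn]
        linarith [hf0 j, hfU j]
      have hUhi' : ∀ j : ℤ, U j (n + 1) ≤ (L : ℝ) := by
        intro j
        rw [hUf j n hn]
        linarith [hf0 (j + 1), hfL j]
      -- integrality of f at time n+1
      have hfint' : ∀ j : ℤ, ∃ k : ℤ, f j (n + 1) = (k : ℝ) := by
        intro j
        obtain ⟨a1, ha1⟩ := hUint' (j - 1)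
        obtain ⟨a2, ha2⟩ := hUint' j
        obtain ⟨c, hc, _⟩ := (ih j).2.2.1
        refine ⟨min a1 (min (L - a2) c), ?_⟩
        have h1 : (n + 1 - 1 : ℤ) = n := by ring
        simp only [hfdef, h1]
        rw [ha1, ha2, hc]
        push_cast
        rfl
      intro j
      refine ⟨?_, ?_, ?_, ?_⟩
      · obtain ⟨a, ha⟩ := hUint' j
        refine ⟨a, ha, ?_, ?_⟩
        · have := hUlo' j; rw [ha] at this; exact_mod_cast this
        · have := hUhi' j; rw [ha] at this; exact_mod_cast this
      · have h1 : (n + 1 - 1 : ℤ) = n := by ring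
        rw [h1]
        obtain ⟨c, hc, h0⟩ := (ih j).2.2.1
        exact ⟨c, hc, h0⟩
      · obtain ⟨c, hc, _⟩ := (ih j).2.2.1
        obtain ⟨k1, hk1⟩ := hfint j
        obtain ⟨k2, hk2⟩ := hfint' j
        refine ⟨c + k1 - k2, ?_, ?_⟩
        · rw [hVf j n hn, hc, hk1, hk2]; push_cast; ring
        · have hpos : (0 : ℝ) ≤ V j (n + 1) := by
            rw [hVf j n hn]
            linarith [hf0 j, hfV j]
          rw [hVf j n hn, hc, hk1, hk2] at hpos
          have : (0 : ℝ) ≤ ((c + k1 - k2 : ℤ) : ℝ) := by push_cast; linarith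
          exact_mod_cast this
      · have hrec := hVf j n hn
        have := (ih j).2.2.2
        linarith
  intro n hn j
  have hn0 : (0 : ℤ) ≤ n := by linarith
  obtain ⟨hUpart, hVmpart, hVpart, hcons⟩ := key n hn0 j
  refine ⟨hUpart, ?_⟩
  obtain ⟨c, hc, hc0⟩ := hVpart
  refine ⟨c, hc, hc0, ?_⟩
  -- f j n ≥ 0
  have hUlo : (0 : ℝ) ≤ U (j - 1) n := by
    obtain ⟨a, ha, h0, _⟩ := (key n hn0 (j - 1)).1; rw [ha]; exact_mod_cast h0
  have hUhi : U j n ≤ (L : ℝ) := by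
    obtain ⟨a, ha, _, h1⟩ := hUpart; rw [ha]; exact_mod_cast h1
  have hVmlo : (0 : ℝ) ≤ V j (n - 1) := by
    obtain ⟨b, hb, h0⟩ := hVmpart; rw [hb]; exact_mod_cast h0
  have hfn0 : (0 : ℝ) ≤ f j n :=
    le_min hUlo (le_min (by linarith) hVmlo)
  -- I_j^0 ≤ M
  have hI0 : V j 0 + f j 0 ≤ M := by
    have h0 : (0 - 1 : ℤ) = -1 := by ring
    have := hM j
    simp only [hfdef, h0]
    linarith
  have : V j n ≤ M := by linarith
  rw [hc] at this
  exact this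
end

section
/- Suppose Ṽ_j^{-1} = 0 for all j in the parameter-free CRW-type ultradiscrete Burgers equation with 0 ≤ U_j^0 ≤ L and Ṽ_j^0 ≥ 0. Then I_j^0 = Ṽ_j^0 for all j, and hence 0 ≤ Ṽ_j^n ≤ Ṽ_j^0 for all n ≥ 1 and all j (assuming additionally Ṽ_j^0 ≤ L so that the hypotheses of the boundedness theorem hold). -/
/-- Specialization of Theorem 2: if Ṽ_j^{-1} = 0 for all j, then
I_j^0 = Ṽ_j^0, so the initial values Ṽ_j^0 bound the maximum inflow for all
later times: 0 ≤ Ṽ_j^n ≤ Ṽ_j^0 for all n ≥ 1. -/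
theorem crw_ud_burgers_controller (L : ℝ) (U V : ℤ → ℤ → ℝ)
    (hU : ∀ (j n : ℤ), 0 ≤ n →
      U j (n + 1) = U j n
        + min (U (j - 1) n) (min (L - U j n) (V j (n - 1)))
        - min (U j n) (min (L - U (j + 1) n) (V (j + 1) (n - 1))))
    (hV : ∀ (j n : ℤ), 0 ≤ n →
      V j (n + 1) = V j n
        + min (U (j - 1) n) (min (L - U j n) (V j (n - 1)))
        - min (U (j - 1) (n + 1)) (min (L - U j (n + 1)) (V j n)))
    (hU0 : ∀ j : ℤ, 0 ≤ U j 0 ∧ U j 0 ≤ L)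
    (hVm1 : ∀ j : ℤ, V j (-1) = 0)
    (hV0 : ∀ j : ℤ, 0 ≤ V j 0 ∧ V j 0 ≤ L) :
    (∀ j : ℤ, min (U (j - 1) 0) (min (L - U j 0) (V j (-1))) + V j 0 = V j 0) ∧
    (∀ (n : ℤ), 1 ≤ n → ∀ j : ℤ, 0 ≤ V j n ∧ V j n ≤ V j 0) := by
  set I : ℤ → ℤ → ℝ := fun j n => min (U (j - 1) n) (min (L - U j n) (V j (n - 1)))
    with hIdef
  have hIe : ∀ j n : ℤ, I j n = min (U (j - 1) n) (min (L - U j n) (V j (n - 1))) :=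
    fun j n => rfl
  -- the inflow at time 0 vanishes
  have hI0 : ∀ j : ℤ, I j 0 = 0 := by
    intro j
    rw [hIe]
    have e : (0:ℤ) - 1 = -1 := by norm_num
    rw [e, hVm1 j]
    rw [min_eq_right (by linarith [(hU0 j).2] : (0:ℝ) ≤ L - U j 0)]
    exact min_eq_right (hU0 (j-1)).1
  -- rewrite the recursions in terms of I
  have hUrec : ∀ (j n : ℤ), 0 ≤ n → U j (n + 1) = U j n + I j n - I (j + 1) n := by
    intro j n hn
    rw [hU j n hn, hIe, hIe]
    have e : j + 1 - 1 = j := by ring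
    rw [e]
  have hVrec : ∀ (j n : ℤ), 0 ≤ n → V j (n + 1) = V j n + I j n - I j (n + 1) := by
    intro j n hn
    rw [hV j n hn, hIe, hIe]
    have e : n + 1 - 1 = n := by ring
    rw [e]
  -- main induction
  have key : ∀ m : ℕ, (∀ j : ℤ, 0 ≤ U j m ∧ U j m ≤ L) ∧
      (∀ j : ℤ, 0 ≤ I j m ∧ I j m ≤ V j 0) ∧
      (∀ j : ℤ, V j m + I j m = V j 0) := by
    intro m
    induction m with
    | zero =>
        refine ⟨by exact_mod_cast hU0, ?_, ?_⟩
        · intro j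
          simp only [Nat.cast_zero, hI0 j]
          exact ⟨le_refl 0, (hV0 j).1⟩
        · intro j
          simp only [Nat.cast_zero, hI0 j, add_zero]
    | succ m ih =>
        obtain ⟨hA, hB, hC⟩ := ih
        have hmn : (0:ℤ) ≤ (m:ℤ) := Int.natCast_nonneg m
        have ecast : ((m + 1 : ℕ) : ℤ) = (m : ℤ) + 1 := by push_cast; ring
        -- V at time m lies in [0, V j 0]
        have hVm : ∀ j : ℤ, 0 ≤ V j m ∧ V j m ≤ V j 0 := by
          intro j
          have := hC j
          constructor
          · linarith [(hB j).2]
          · linarith [(hB j).1]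
        have hA' : ∀ j : ℤ, 0 ≤ U j ((m:ℤ) + 1) ∧ U j ((m:ℤ) + 1) ≤ L := by
          intro j
          rw [hUrec j m hmn]
          have hin := hB j
          have hout1 : I (j + 1) (m:ℤ) ≤ U j m := by
            rw [hIe]
            have e : j + 1 - 1 = j := by ring
            rw [e]
            exact min_le_left _ _
          have hout0 : 0 ≤ I (j + 1) (m:ℤ) := (hB (j + 1)).1
          have hinU : I j (m:ℤ) ≤ L - U j m := by
            rw [hIe]
            exact le_trans (min_le_right _ _) (min_le_left _ _)
          constructor
          · linarith [hin.1]
          · linarith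
        have hB' : ∀ j : ℤ, 0 ≤ I j ((m:ℤ) + 1) ∧ I j ((m:ℤ) + 1) ≤ V j 0 := by
          intro j
          rw [hIe]
          have e : (m:ℤ) + 1 - 1 = (m:ℤ) := by ring
          rw [e]
          constructor
          · exact le_min (hA' (j - 1)).1 (le_min (by linarith [(hA' j).2]) (hVm j).1)
          · exact le_trans (le_trans (min_le_right _ _) (min_le_right _ _)) (hVm j).2
        refine ⟨?_, ?_, ?_⟩
        · intro j; rw [ecast]; exact hA' j
        · intro j; rw [ecast]; exact hB' j
        · intro j
          rw [ecast, hVrec j m hmn]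
          have := hC j
          linarith
  constructor
  · intro j
    have := hI0 j
    rw [hIe] at this
    have e : (0:ℤ) - 1 = -1 := by norm_num
    rw [e] at this
    rw [this, zero_add]
  · intro n hn j
    obtain ⟨m, rfl⟩ : ∃ m : ℕ, n = (m : ℤ) :=
      ⟨n.toNat, (Int.toNat_of_nonneg (by linarith)).symm⟩
    obtain ⟨hA, hB, hC⟩ := key m
    have := hC j
    exact ⟨by linarith [(hB j).2], by linarith [(hB j).1]⟩
end
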